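/- Let A ∈ ℂ^{n×n} be positive semidefinite and B ∈ ℂ^{n×n} Hermitian. If the number of negative eigenvalues (counted with multiplicity) of A + B equals the number of negative eigenvalues of B, then the kernel of A + B is contained in the kernel of A. -/

import Mathlib

open Matrix
open scoped ComplexOrder

/-- The number of negative eigenvalues (counted with multiplicity) of a Hermitian matrix. -/
noncomputable def negEigCount {n : ℕ} {M : Matrix (Fin n) (Fin n) ℂ}
    (hM : M.IsHermitian) : ℕ :=
  Nat.card {i : Fin n // hM.eigenvalues i < 0}

section Aux
open Module Submodule
open scoped InnerProductSpace

variable {n : ℕ}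

private lemma inner_mulVec_eig (M : Matrix (Fin n) (Fin n) ℂ) (hM : M.IsHermitian) (i : Fin n)
    (v : EuclideanSpace ℂ (Fin n)) :
    ⟪hM.eigenvectorBasis i, (WithLp.equiv 2 _).symm (M *ᵥ v)⟫_ℂ
      = (hM.eigenvalues i : ℂ) * ⟪hM.eigenvectorBasis i, v⟫_ℂ := by
  rw [EuclideanSpace.inner_eq_star_dotProduct, EuclideanSpace.inner_eq_star_dotProduct]
  have h1 : star ⇑(hM.eigenvectorBasis i) ᵥ* M
      = (hM.eigenvalues i : ℂ) • star ⇑(hM.eigenvectorBasis i) := by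
    have := Matrix.star_mulVec M ⇑(hM.eigenvectorBasis i)
    rw [hM.eq] at this
    rw [← this, hM.mulVec_eigenvectorBasis]
    ext j
    simp [Complex.real_smul]
  show (M *ᵥ _) ⬝ᵥ star ⇑(hM.eigenvectorBasis i) = _
  rw [dotProduct_comm, Matrix.dotProduct_mulVec, h1, smul_dotProduct, dotProduct_comm]
  rfl

private lemma quad_expansion (M : Matrix (Fin n) (Fin n) ℂ) (hM : M.IsHermitian)
    (v : EuclideanSpace ℂ (Fin n)) :
    star (v : Fin n → ℂ) ⬝ᵥ M *ᵥ (v : Fin n → ℂ)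
      = ((∑ i, hM.eigenvalues i * Complex.normSq (hM.eigenvectorBasis.repr v i) : ℝ) : ℂ) := by
  have key := hM.eigenvectorBasis.sum_inner_mul_inner v ((WithLp.equiv 2 _).symm (M *ᵥ v))
  have lhs : ⟪v, (WithLp.equiv 2 _).symm (M *ᵥ v)⟫_ℂ
      = star (v : Fin n → ℂ) ⬝ᵥ M *ᵥ (v : Fin n → ℂ) := by
    rw [EuclideanSpace.inner_eq_star_dotProduct]; exact dotProduct_comm _ _
  rw [← lhs, ← key]
  rw [Complex.ofReal_sum]
  refine Finset.sum_congr rfl fun i _ => ?_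
  rw [inner_mulVec_eig M hM i v, hM.eigenvectorBasis.repr_apply_apply,
    ← inner_conj_symm (hM.eigenvectorBasis i) v]
  set d := ⟪v, hM.eigenvectorBasis i⟫_ℂ
  rw [Complex.ofReal_mul, Complex.normSq_conj, ← Complex.mul_conj]
  ring

private lemma repr_zero_of_mem_span (M : Matrix (Fin n) (Fin n) ℂ) (hM : M.IsHermitian)
    (S : Set (Fin n)) (v : EuclideanSpace ℂ (Fin n))
    (hv : v ∈ span ℂ (⇑hM.eigenvectorBasis '' S)) {j : Fin n} (hj : j ∉ S) :
    hM.eigenvectorBasis.repr v j = 0 := by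
  rw [← hM.eigenvectorBasis.coe_toBasis_repr_apply]
  rw [← hM.eigenvectorBasis.coe_toBasis, Basis.mem_span_image] at hv
  by_contra h
  exact hj (hv (Finsupp.mem_support_iff.2 (by
    rwa [hM.eigenvectorBasis.coe_toBasis_repr_apply] at h ⊢)))

private lemma span_finrank (M : Matrix (Fin n) (Fin n) ℂ) (hM : M.IsHermitian)
    (S : Set (Fin n)) :
    finrank ℂ (span ℂ (⇑hM.eigenvectorBasis '' S)) = Nat.card S := by
  classical
  have hli : LinearIndependent ℂ (fun i : S => hM.eigenvectorBasis i) :=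
    (hM.eigenvectorBasis.toBasis.linearIndependent.comp _ Subtype.val_injective)
  have : ⇑hM.eigenvectorBasis '' S = Set.range (fun i : S => hM.eigenvectorBasis i) := by
    rw [Set.image_eq_range]
  rw [this, finrank_span_eq_card hli, Nat.card_eq_fintype_card]

private lemma quad_nonneg_on_span (M : Matrix (Fin n) (Fin n) ℂ) (hM : M.IsHermitian)
    (v : EuclideanSpace ℂ (Fin n))
    (hv : v ∈ span ℂ (⇑hM.eigenvectorBasis '' {i | 0 ≤ hM.eigenvalues i})) :
    0 ≤ star (v : Fin n → ℂ) ⬝ᵥ M *ᵥ (v : Fin n → ℂ) := by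
  rw [quad_expansion M hM v, ← Complex.ofReal_zero, Complex.real_le_real]
  refine Finset.sum_nonneg fun i _ => ?_
  by_cases hi : 0 ≤ hM.eigenvalues i
  · exact mul_nonneg hi (Complex.normSq_nonneg _)
  · rw [repr_zero_of_mem_span M hM _ v hv hi]
    simp

private lemma quad_neg_on_span (M : Matrix (Fin n) (Fin n) ℂ) (hM : M.IsHermitian)
    (v : EuclideanSpace ℂ (Fin n))
    (hv : v ∈ span ℂ (⇑hM.eigenvectorBasis '' {i | hM.eigenvalues i < 0})) (hv0 : v ≠ 0) :
    star (v : Fin n → ℂ) ⬝ᵥ M *ᵥ (v : Fin n → ℂ) < 0 := by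
  rw [quad_expansion M hM v, ← Complex.ofReal_zero, Complex.real_lt_real]
  have : ∃ j, hM.eigenvectorBasis.repr v j ≠ 0 := by
    by_contra h
    push_neg at h
    apply hv0
    have : hM.eigenvectorBasis.repr v = 0 := by
      ext j; exact h j
    simpa using hM.eigenvectorBasis.repr.injective (by simpa using this)
  obtain ⟨j, hj⟩ := this
  have hjS : hM.eigenvalues j < 0 := by
    by_contra hjS
    exact hj (repr_zero_of_mem_span M hM _ v hv hjS)
  have := Finset.sum_lt_sum (s := Finset.univ)
    (f := fun i => hM.eigenvalues i * Complex.normSq (hM.eigenvectorBasis.repr v i))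
    (g := fun _ => (0 : ℝ)) ?_ ?_
  · simpa using this
  · intro i _
    dsimp only
    by_cases hi : hM.eigenvalues i < 0
    · exact mul_nonpos_of_nonpos_of_nonneg hi.le (Complex.normSq_nonneg _)
    · rw [repr_zero_of_mem_span M hM _ v hv hi]; simp
  · exact ⟨j, Finset.mem_univ j,
      mul_neg_of_neg_of_pos hjS (Complex.normSq_pos.2 hj)⟩

private lemma finrank_le_negEigCount (M : Matrix (Fin n) (Fin n) ℂ) (hM : M.IsHermitian)
    (V : Submodule ℂ (EuclideanSpace ℂ (Fin n)))
    (hV : ∀ v : EuclideanSpace ℂ (Fin n), v ∈ V → v ≠ 0 →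
      star (v : Fin n → ℂ) ⬝ᵥ M *ᵥ (v : Fin n → ℂ) < 0) :
    finrank ℂ V ≤ negEigCount hM := by
  classical
  set P := span ℂ (⇑hM.eigenvectorBasis '' {i | 0 ≤ hM.eigenvalues i})
  have hdisj : V ⊓ P = ⊥ := by
    rw [Submodule.eq_bot_iff]
    intro v ⟨hvV, hvP⟩
    by_contra hv0
    exact lt_irrefl (0 : ℂ) (lt_of_le_of_lt (quad_nonneg_on_span M hM v hvP) (hV v hvV hv0))
  have hsum := Submodule.finrank_sup_add_finrank_inf_eq V P
  rw [hdisj, finrank_bot] at hsum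
  have hle : finrank ℂ ↥(V ⊔ P) ≤ n := by
    have := Submodule.finrank_le (V ⊔ P)
    rwa [finrank_euclideanSpace_fin] at this
  have hP : finrank ℂ P = Nat.card {i | 0 ≤ hM.eigenvalues i} := span_finrank M hM _
  have hcard : Nat.card {i | 0 ≤ hM.eigenvalues i} + negEigCount hM = n := by
    rw [negEigCount]
    rw [Nat.card_eq_fintype_card, Nat.card_eq_fintype_card]
    have e1 : Fintype.card ↑{i | 0 ≤ hM.eigenvalues i}
        = Fintype.card {i : Fin n // ¬ hM.eigenvalues i < 0} :=
      Fintype.card_congr (Equiv.subtypeEquivRight fun i => by simp [Set.mem_setOf_eq, not_lt])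
    rw [e1, Fintype.card_subtype_compl]
    have := Fintype.card_subtype_le (fun i : Fin n => hM.eigenvalues i < 0)
    simp only [Fintype.card_fin] at *
    omega
  omega


end Aux

section Main
open Module Submodule
open scoped InnerProductSpace

/-- If `A` is positive semidefinite, `B` is Hermitian, and `A + B` has the same number of
negative eigenvalues as `B`, then `ker (A + B) ⊆ ker A`. -/
theorem stmt0 {n : ℕ} (A B : Matrix (Fin n) (Fin n) ℂ)
    (hA : A.PosSemidef) (hB : B.IsHermitian)
    (hcount : negEigCount (hA.1.add hB) = negEigCount hB) :
    ∀ x : Fin n → ℂ, (A + B) *ᵥ x = 0 → A *ᵥ x = 0 := by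
  intro x hx
  by_contra hAx
  set C := A + B with hCdef
  have hC : C.IsHermitian := hA.1.add hB
  set x' : EuclideanSpace ℂ (Fin n) := (WithLp.equiv 2 _).symm x with hx'def
  have hx0 : x ≠ 0 := fun h => hAx (by rw [h, mulVec_zero])
  have hx'0 : x' ≠ 0 := by
    rw [hx'def]; intro h; exact hx0 (by simpa using congrArg WithLp.ofLp h)
  set W := span ℂ (⇑hC.eigenvectorBasis '' {i | hC.eigenvalues i < 0}) with hWdef
  have hqCx : star x ⬝ᵥ C *ᵥ x = 0 := by rw [hx, dotProduct_zero]
  have hxW : x' ∉ W := by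
    intro hmem
    have h1 := quad_neg_on_span C hC x' hmem hx'0
    rw [show star (x' : Fin n → ℂ) ⬝ᵥ C *ᵥ (x' : Fin n → ℂ) = star x ⬝ᵥ C *ᵥ x from rfl,
      hqCx] at h1
    exact lt_irrefl 0 h1
  set V := W ⊔ span ℂ {x'} with hVdef
  have horth : ∀ w : Fin n → ℂ, star x ⬝ᵥ C *ᵥ w = 0 := by
    intro w
    rw [Matrix.dotProduct_mulVec]
    have h2 : star x ᵥ* C = 0 := by
      have h3 := Matrix.star_mulVec C x
      rw [hx, hC.eq] at h3
      simpa using h3.symm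
    rw [h2, zero_dotProduct]
  -- negativity of the B-form on V
  have hneg : ∀ v : EuclideanSpace ℂ (Fin n), v ∈ V → v ≠ 0 →
      star (v : Fin n → ℂ) ⬝ᵥ B *ᵥ (v : Fin n → ℂ) < 0 := by
    intro v hv hv0
    obtain ⟨w, hw, z, hz, rfl⟩ := Submodule.mem_sup.1 hv
    obtain ⟨c, rfl⟩ := Submodule.mem_span_singleton.1 hz
    set wf : Fin n → ℂ := WithLp.equiv 2 _ w with hwf
    show star (wf + c • x) ⬝ᵥ B *ᵥ (wf + c • x) < 0
    have hCv : star (wf + c • x) ⬝ᵥ C *ᵥ (wf + c • x) = star wf ⬝ᵥ C *ᵥ wf := by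
      rw [Matrix.mulVec_add, Matrix.mulVec_smul, hx, smul_zero, add_zero, star_add,
        add_dotProduct, star_smul, smul_dotProduct, horth]
      simp
    have hsplit : star (wf + c • x) ⬝ᵥ C *ᵥ (wf + c • x)
        = star (wf + c • x) ⬝ᵥ A *ᵥ (wf + c • x)
          + star (wf + c • x) ⬝ᵥ B *ᵥ (wf + c • x) := by
      rw [hCdef, Matrix.add_mulVec, dotProduct_add]
    have hqA : 0 ≤ star (wf + c • x) ⬝ᵥ A *ᵥ (wf + c • x) := hA.dotProduct_mulVec_nonneg _
    have hBform : star (wf + c • x) ⬝ᵥ B *ᵥ (wf + c • x)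
        = star wf ⬝ᵥ C *ᵥ wf - star (wf + c • x) ⬝ᵥ A *ᵥ (wf + c • x) := by
      rw [← hCv, hsplit]; ring
    rw [hBform]
    by_cases hw0 : w = 0
    · have hc : c ≠ 0 := by
        intro hc0
        apply hv0
        rw [hc0, zero_smul, add_zero, hw0]
      have hwf0 : wf = 0 := by rw [hwf, hw0]; rfl
      have hAv : A *ᵥ (wf + c • x) ≠ 0 := by
        rw [hwf0, zero_add, Matrix.mulVec_smul]
        intro h
        exact hAx (by simpa [hc] using smul_eq_zero.1 h)
      have hqA' : 0 < star (wf + c • x) ⬝ᵥ A *ᵥ (wf + c • x) := by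
        rcases lt_or_eq_of_le hqA with h | h
        · exact h
        · exact absurd ((hA.dotProduct_mulVec_zero_iff _).1 h.symm) hAv
      rw [hwf0]
      rw [show star (0 : Fin n → ℂ) ⬝ᵥ C *ᵥ (0 : Fin n → ℂ) = 0 by simp]
      rw [hwf0] at hqA'
      rw [zero_sub, neg_lt_zero]
      exact hqA' 
    · have hqC : star wf ⬝ᵥ C *ᵥ wf < 0 := quad_neg_on_span C hC w hw hw0
      calc star wf ⬝ᵥ C *ᵥ wf - star (wf + c • x) ⬝ᵥ A *ᵥ (wf + c • x)
          ≤ star wf ⬝ᵥ C *ᵥ wf := sub_le_self _ hqA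
        _ < 0 := hqC
  -- dimension count
  have hdisjW : W ⊓ span ℂ {x'} = ⊥ := by
    rw [Submodule.eq_bot_iff]
    rintro z ⟨hzW, hzx⟩
    obtain ⟨c, rfl⟩ := Submodule.mem_span_singleton.1 hzx
    rcases eq_or_ne c 0 with rfl | hc
    · rw [zero_smul]
    · exact absurd (Submodule.smul_mem W c⁻¹ hzW) (by rwa [inv_smul_smul₀ hc])
  have hsum := Submodule.finrank_sup_add_finrank_inf_eq W (span ℂ {x'})
  rw [hdisjW, finrank_bot, add_zero, finrank_span_singleton hx'0] at hsum
  have hWrank : finrank ℂ W = negEigCount hC := span_finrank C hC _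
  have hVrank : finrank ℂ V = negEigCount hC + 1 := by
    rw [hVdef, hsum, hWrank]
  have hbound := finrank_le_negEigCount B hB V hneg
  rw [hVrank, ← hcount] at hbound
  omega

end Main
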